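/- For any 0 < ε < 1 and any integer K = 1/ε² ≥ 4, and any integer c with 1 ≤ c ≤ 4K/5, if c' is the result of rounding c/K to the nearest point of a geometric discretization of [1/5·K⁻¹·K, 1] with ratio (1+ε/15) — i.e., |c' − c| ≤ (ε/15)c — then |ln(1 − c'/K) − ln(1 − c/K)| ≤ (ε/3)|ln(1 − c/K)|. -/

import Mathlib

set_option maxHeartbeats 1000000

lemma abs_log_sub_le_aux (m p q : ℝ) (hm : 0 < m) (hp : m ≤ p) (hq : m ≤ q)
    (hpq : p ≤ q) : Real.log q - Real.log p ≤ (q - p) / m := by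
  have hp0 : 0 < p := lt_of_lt_of_le hm hp
  have hq0 : 0 < q := lt_of_lt_of_le hm hq
  have h1 : Real.log q - Real.log p = Real.log (q / p) :=
    (Real.log_div hq0.ne' hp0.ne').symm
  rw [h1]
  have h2 : Real.log (q / p) ≤ q / p - 1 := Real.log_le_sub_one_of_pos (div_pos hq0 hp0)
  have h3 : q / p - 1 = (q - p) / p := by field_simp
  rw [h3] at h2
  refine h2.trans ?_
  gcongr

lemma abs_log_sub_le (a b m : ℝ) (hm : 0 < m) (ha : m ≤ a) (hb : m ≤ b) :
    |Real.log a - Real.log b| ≤ |a - b| / m := by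
  rcases le_total a b with h | h
  · have h1 := abs_log_sub_le_aux m a b hm ha hb h
    have h2 : Real.log a ≤ Real.log b := Real.log_le_log (lt_of_lt_of_le hm ha) h
    rw [abs_of_nonpos (by linarith : Real.log a - Real.log b ≤ 0),
      abs_of_nonpos (by linarith : a - b ≤ 0)]
    have h3 : -(a - b) / m = (b - a) / m := by ring
    rw [h3]
    linarith
  · have h1 := abs_log_sub_le_aux m b a hm hb ha h
    have h2 : Real.log b ≤ Real.log a := Real.log_le_log (lt_of_lt_of_le hm hb) h
    rw [abs_of_nonneg (by linarith : 0 ≤ Real.log a - Real.log b),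
      abs_of_nonneg (by linarith : 0 ≤ a - b)]
    linarith

/-- For `0 < ε < 1`, integer `K = 1/ε² ≥ 4`, and any integer `1 ≤ c ≤ 4K/5`, if
`c'` approximates `c` with relative error `ε/15` (as in rounding `c/K` to a geometric
discretization with ratio `1 + ε/15`), then
`|ln(1 − c'/K) − ln(1 − c/K)| ≤ (ε/3)|ln(1 − c/K)|`. -/
theorem stmt_19 (ε : ℝ) (hε0 : 0 < ε) (hε1 : ε < 1) (K : ℕ) (hK4 : 4 ≤ K)
    (hKε : (K : ℝ) = 1 / ε ^ 2) (c : ℕ) (hc1 : 1 ≤ c) (hc2 : (c : ℝ) ≤ 4 * K / 5)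
    (c' : ℝ) (hc' : |c' - c| ≤ (ε / 15) * c) :
    |Real.log (1 - c' / K) - Real.log (1 - (c : ℝ) / K)|
      ≤ (ε / 3) * |Real.log (1 - (c : ℝ) / K)| := by
  have hK0 : (0:ℝ) < K := by positivity
  set x : ℝ := (c : ℝ) / K with hxdef
  have hx0 : 0 < x := by
    have : (0:ℝ) < (c:ℝ) := by exact_mod_cast hc1
    positivity
  have hx : x ≤ 4 / 5 := by
    rw [hxdef, div_le_iff₀ hK0]; linarith
  set a : ℝ := 1 - c' / K with hadef
  set b : ℝ := 1 - x with hbdef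
  -- ε ≤ 1/2
  have hε2 : ε ≤ 1 / 2 := by
    have h4 : (4:ℝ) ≤ 1 / ε ^ 2 := by rw [← hKε]; exact_mod_cast hK4
    have hε2pos : 0 < ε ^ 2 := by positivity
    rw [le_div_iff₀ hε2pos] at h4
    nlinarith
  -- |a - b| ≤ ε * x / 15
  have hab : |a - b| ≤ ε * x / 15 := by
    have : a - b = -((c' - c) / K) := by
      rw [hadef, hbdef, hxdef]; ring
    rw [this, abs_neg, abs_div, abs_of_pos hK0, div_le_iff₀ hK0]
    calc |c' - c| ≤ ε / 15 * c := hc'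
      _ = ε * x / 15 * K := by rw [hxdef]; field_simp
  have hb5 : 1 / 5 ≤ b := by rw [hbdef]; linarith
  have hb1 : b < 1 := by rw [hbdef]; linarith
  have hb0 : 0 < b := by linarith
  have hlogb0 : Real.log b ≤ 0 := Real.log_nonpos (le_of_lt hb0) (le_of_lt hb1)
  have habs : |Real.log b| = -Real.log b := abs_of_nonpos hlogb0
  -- -log b ≥ x
  have hlogx : x ≤ -Real.log b := by
    have := Real.log_le_sub_one_of_pos hb0
    rw [hbdef] at this ⊢; linarith
  -- lower bound on a
  have ha_lb : b - ε * x / 15 ≤ a := by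
    have := abs_le.mp hab
    linarith [this.2]
  rcases le_or_gt x (7/10) with hcase | hcase
  · -- x ≤ 7/10 : use m = 1/5
    have ham : 1 / 5 ≤ a := by
      have : ε * x / 15 ≤ x / 30 := by nlinarith
      rw [hbdef] at ha_lb
      nlinarith
    have key := abs_log_sub_le a b (1/5) (by norm_num) ham hb5
    have : |a - b| / (1/5) ≤ ε * x / 3 := by
      rw [div_le_iff₀ (by norm_num : (0:ℝ) < 1/5)] at *
      nlinarith
    rw [habs]
    calc |Real.log a - Real.log b| ≤ |a - b| / (1/5) := key
      _ ≤ ε * x / 3 := this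
      _ ≤ ε / 3 * (-Real.log b) := by nlinarith
  · -- x > 7/10 : use m = 13/75, and -log b ≥ 1
    have ham : 13 / 75 ≤ a := by
      have : ε * x / 15 ≤ x / 30 := by nlinarith
      rw [hbdef] at ha_lb
      nlinarith
    have hbm : (13:ℝ) / 75 ≤ b := by linarith
    have key := abs_log_sub_le a b (13/75) (by norm_num) ham hbm
    -- -log b ≥ 1
    have hlog1 : 1 ≤ -Real.log b := by
      have hble : b ≤ 3 / 10 := by rw [hbdef]; linarith
      have h1 : Real.log b ≤ Real.log (3/10) := Real.log_le_log hb0 hble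
      have h2 : Real.log ((3:ℝ)/10) = -Real.log (10/3) := by
        rw [show (3:ℝ)/10 = (10/3)⁻¹ by norm_num, Real.log_inv]
      have h3 : 1 ≤ Real.log ((10:ℝ)/3) := by
        rw [Real.le_log_iff_exp_le (by norm_num : (0:ℝ) < 10/3)]
        calc Real.exp 1 ≤ 2.7182818286 := le_of_lt Real.exp_one_lt_d9
          _ ≤ 10/3 := by norm_num
      rw [h2] at h1
      linarith
    rw [habs]
    calc |Real.log a - Real.log b| ≤ |a - b| / (13/75) := key
      _ ≤ (ε * x / 15) / (13/75) := by gcongr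
      _ = 5 * ε * x / 13 := by ring
      _ ≤ 4 * ε / 13 := by nlinarith
      _ ≤ ε / 3 * 1 := by nlinarith
      _ ≤ ε / 3 * (-Real.log b) := by nlinarith
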